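/- With the Tom unprojection data below, let v = (−λc, λb, 0, 0, 0, d, e, g, 0, 0, 0, 0, 0, 0, 0, 0) be a row 16-vector. Then Σ_{r=1}^{16} v_r · (c_r)_j equals −λab−dh+ef for j = 1, equals −λac−eh+fg for j = 2, and equals 0 for j = 3,…,9. That is, v expresses the Koszul syzygy between the generators L₁ = λac+eh−fg and L₂ = −λab−dh+ef as a combination of the 16 minimal first syzygies. -/
import Mathlib


open Matrix MvPolynomial

/-- For the Tom unprojection data, the vector
`v = (−λc, λb, 0, 0, 0, d, e, g, 0, …, 0)` expresses the Koszul syzygy between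
the generators `L₁ = λac+eh−fg` and `L₂ = −λab−dh+ef`: the combination
`Σ_r v_r · c_r` of the 16 columns of `M₁` is the vector
`(−λab−dh+ef, −λac−eh+fg, 0, …, 0)`. -/
theorem tom_koszul_syzygy_combination (R : Type*) [CommRing R]
    (a b c d e f g h i l : MvPolynomial (Fin 10) R)
    (hvars : (a, b, c, d, e, f, g, h, i, l) =
      (X 0, X 1, X 2, X 3, X 4, X 5, X 6, X 7, X 8, X 9))
    (L : Fin 9 → MvPolynomial (Fin 10) R)
    (hL : L = ![l*a*c + e*h - f*g, -(l*a*b) - d*h + e*f, l*a^2 + d*g - e^2,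
      a*h - b*g + c*e, -(a*f) + b*e - c*d, l*b^2 + d*i - f^2,
      l*b*c + e*i - f*h, l*c^2 + g*i - h^2, a*i - b*h + c*f])
    (M₁ : Matrix (Fin 9) (Fin 16) (MvPolynomial (Fin 10) R))
    (hM₁ : M₁ = (!![0, a, b, d, e, 0, 0, 0, 0;
      -a, 0, c, e, g, 0, 0, 0, 0;
      -b, -c, 0, f, h, 0, 0, 0, 0;
      -d, -e, -f, 0, -(l*a), 0, 0, 0, 0;
      -e, -g, -h, l*a, 0, 0, 0, 0, 0;
      -h, 0, 0, l*c, 0, 0, g, -e, 0;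
      f, -h, 0, -(l*b), l*c, -g, 0, d, 0;
      0, f, 0, 0, -(l*b), e, -d, 0, 0;
      i, 0, 0, 0, 0, 0, -h, f, -(l*c);
      0, i, 0, 0, 0, h, -f, 0, l*b;
      0, h, i, 0, -(l*c), 0, e, -d, -(l*a);
      0, 0, 0, i, 0, 0, -c, b, -h;
      0, 0, 0, 0, i, c, -b, 0, f;
      0, -b, 0, 0, f, -a, 0, 0, d;
      0, -c, 0, 0, h, 0, -a, 0, e;
      c, 0, 0, -h, 0, 0, 0, -a, g] :
        Matrix (Fin 16) (Fin 9) (MvPolynomial (Fin 10) R))ᵀ)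
    (v : Fin 16 → MvPolynomial (Fin 10) R)
    (hv : v = ![-(l*c), l*b, 0, 0, 0, d, e, g, 0, 0, 0, 0, 0, 0, 0, 0])
    : ∀ j : Fin 9, ∑ r : Fin 16, v r * M₁ j r =
      ![-(l*a*b) - d*h + e*f, -(l*a*c) - e*h + f*g, 0, 0, 0, 0, 0, 0, 0] j := by
  subst hM₁ hv
  intro j
  fin_cases j <;>
  · simp [Fin.sum_univ_succ, Matrix.transpose_apply, Matrix.cons_val_succ,
      show (5:Fin 9) = Fin.succ (Fin.succ (Fin.succ (Fin.succ (Fin.succ 0)))) from rfl,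
      show (6:Fin 9) = Fin.succ (Fin.succ (Fin.succ (Fin.succ (Fin.succ (Fin.succ 0))))) from rfl,
      show (7:Fin 9) = Fin.succ (Fin.succ (Fin.succ (Fin.succ (Fin.succ (Fin.succ (Fin.succ 0)))))) from rfl,
      show (8:Fin 9) = Fin.succ (Fin.succ (Fin.succ (Fin.succ (Fin.succ (Fin.succ (Fin.succ (Fin.succ 0))))))) from rfl]
    try ring
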